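/- For all real s,t > 0, all x,y ≥ 0 and all n,m ∈ ℕ: ∫₀¹∫₀¹ D_{s,t}(n,m; x(1−u)+yv, y(1−v)+xu) φ_{s,t}(u,v) du dv = Σ_{k=0}^{n} Σ_{l=0}^{m} r_{s,t}(n,m;k,l) D_{s,t}(n−k+l, m−l+k; x,y). Consequently the generalized Immediate Exchange Model with generator L_{s,t} and the discrete dual process with rates r_{s,t} are dual at the level of generators with duality function D_{s,t}. -/

import Mathlib

open MeasureTheory Finset Real

/-- The Beta function `B(s,t) = Γ(s)Γ(t)/Γ(s+t)`. -/
noncomputable def betaFn (s t : ℝ) : ℝ := Real.Gamma s * Real.Gamma t / Real.Gamma (s + t)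

/-- Joint density of two independent Beta(s,t) random variables. -/
noncomputable def phiBeta (s t u v : ℝ) : ℝ :=
  (1 / betaFn s t) ^ 2 * u ^ (s - 1) * (1 - u) ^ (t - 1) * v ^ (s - 1) * (1 - v) ^ (t - 1)

/-- Duality polynomial `d_{s,t}(k,x) = x^k Γ(s+t)/Γ(s+t+k)`. -/
noncomputable def dst (s t : ℝ) (k : ℕ) (x : ℝ) : ℝ :=
  x ^ k * Real.Gamma (s + t) / Real.Gamma (s + t + k)

/-- Two-variable duality polynomial `D_{s,t}(n,m;x,y) = d_{s,t}(n,x) d_{s,t}(m,y)`. -/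
noncomputable def Dst (s t : ℝ) (n m : ℕ) (x y : ℝ) : ℝ := dst s t n x * dst s t m y

/-- Beta-binomial(n,s,t) probability mass function. -/
noncomputable def wBB (s t : ℝ) (n k : ℕ) : ℝ :=
  Real.Gamma ((n : ℝ) + 1) * Real.Gamma ((k : ℝ) + s) * Real.Gamma (((n - k : ℕ) : ℝ) + t) *
      Real.Gamma (s + t) /
    (Real.Gamma s * Real.Gamma t * Real.Gamma (s + t + n) * Real.Gamma ((k : ℝ) + 1) *
      Real.Gamma (((n - k : ℕ) : ℝ) + 1))

/-- Redistribution rates of the discrete dual process. -/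
noncomputable def rRate (s t : ℝ) (n m k l : ℕ) : ℝ := wBB s t n k * wBB s t m l




lemma cEq {a b : ℝ} (u : ℝ) (hu : u ∈ Set.Ioc (0:ℝ) 1) :
    ((u ^ (a - 1) * (1 - u) ^ (b - 1) : ℝ) : ℂ)
      = (u : ℂ) ^ ((a : ℂ) - 1) * (1 - (u : ℂ)) ^ ((b : ℂ) - 1) := by
  push_cast
  rw [Complex.ofReal_cpow hu.1.le, Complex.ofReal_cpow (by linarith [hu.2])]
  push_cast
  ring

lemma realBeta_intervalIntegrable {a b : ℝ} (ha : 0 < a) (hb : 0 < b) :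
    IntervalIntegrable (fun u : ℝ => u ^ (a - 1) * (1 - u) ^ (b - 1)) volume 0 1 := by
  have h := Complex.betaIntegral_convergent (u := (a : ℂ)) (v := (b : ℂ)) (by simpa) (by simpa)
  rw [intervalIntegrable_iff_integrableOn_Ioc_of_le zero_le_one] at h ⊢
  have h2 : IntegrableOn (fun u : ℝ => ((u ^ (a - 1) * (1 - u) ^ (b - 1) : ℝ) : ℂ))
      (Set.Ioc 0 1) volume := h.congr_fun (fun u hu => (cEq u hu).symm) measurableSet_Ioc
  simpa [IntegrableOn] using h2.re

lemma realBeta_integral {a b : ℝ} (ha : 0 < a) (hb : 0 < b) :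
    ∫ u in (0:ℝ)..1, u ^ (a - 1) * (1 - u) ^ (b - 1) = betaFn a b := by
  have h := Complex.Gamma_mul_Gamma_eq_betaIntegral (s := (a : ℂ)) (t := (b : ℂ))
    (by simpa) (by simpa)
  have hβ : Complex.betaIntegral a b
      = ((∫ u in (0:ℝ)..1, u ^ (a - 1) * (1 - u) ^ (b - 1) : ℝ) : ℂ) := by
    rw [Complex.betaIntegral]
    rw [← intervalIntegral.integral_ofReal]
    refine intervalIntegral.integral_congr_ae ?_
    have h1 : ∀ᵐ u : ℝ, u ∈ Set.uIoc (0:ℝ) 1 →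
        ((u ^ (a - 1) * (1 - u) ^ (b - 1) : ℝ) : ℂ)
          = (u : ℂ) ^ ((a : ℂ) - 1) * (1 - (u : ℂ)) ^ ((b : ℂ) - 1) := by
      filter_upwards with u hu
      rw [Set.uIoc_of_le zero_le_one] at hu
      exact cEq u hu
    filter_upwards [h1] with u hu h2
    exact (hu h2).symm
  rw [hβ] at h
  have hab : Complex.Gamma ((a : ℂ) + (b : ℂ)) ≠ 0 := by
    rw [← Complex.ofReal_add, Complex.Gamma_ofReal]
    exact_mod_cast (Real.Gamma_pos_of_pos (by linarith)).ne'
  rw [betaFn]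
  have := h
  rw [← Complex.ofReal_add, Complex.Gamma_ofReal, Complex.Gamma_ofReal, Complex.Gamma_ofReal] at this
  have h3 : ((Real.Gamma a * Real.Gamma b : ℝ) : ℂ)
      = ((Real.Gamma (a + b) * ∫ u in (0:ℝ)..1, u ^ (a - 1) * (1 - u) ^ (b - 1) : ℝ) : ℂ) := by
    push_cast; exact this
  have h4 := Complex.ofReal_injective h3
  rw [eq_div_iff (Real.Gamma_pos_of_pos (by linarith : (0:ℝ) < a + b)).ne']
  rw [h4]; ring


noncomputable def baseFn (s t : ℝ) (p q : ℕ) (u : ℝ) : ℝ :=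
  u ^ p * (1 - u) ^ q * (u ^ (s - 1) * (1 - u) ^ (t - 1))

lemma baseFn_intervalIntegrable {s t : ℝ} (hs : 0 < s) (ht : 0 < t) (p q : ℕ) :
    IntervalIntegrable (baseFn s t p q) volume 0 1 := by
  have h := (realBeta_intervalIntegrable hs ht).continuousOn_mul
    (g := fun u : ℝ => u ^ p * (1 - u) ^ q) (by fun_prop)
  have he : baseFn s t p q
      = fun x : ℝ => x ^ p * (1 - x) ^ q * (x ^ (s - 1) * (1 - x) ^ (t - 1)) := by
    funext u; rw [baseFn]
  rw [he]; simpa using h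

lemma baseFn_integral {s t : ℝ} (hs : 0 < s) (ht : 0 < t) (p q : ℕ) :
    ∫ u in (0:ℝ)..1, baseFn s t p q u = betaFn (s + p) (t + q) := by
  rw [← realBeta_integral (by positivity : (0:ℝ) < s + p) (by positivity : (0:ℝ) < t + q)]
  refine intervalIntegral.integral_congr_ae ?_
  have h1 : ∀ᵐ u : ℝ, u ≠ 1 := by
    refine (MeasureTheory.ae_iff ..).2 ?_
    simp
  filter_upwards [h1] with u hu1 hu
  rw [Set.uIoc_of_le zero_le_one] at hu
  have hu0 : 0 < u := hu.1
  have hu1' : 0 < 1 - u := lt_of_le_of_ne (by linarith [hu.2]) (by intro h; exact hu1 (by linarith))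
  rw [baseFn, ← Real.rpow_natCast u p, ← Real.rpow_natCast (1 - u) q,
    show (s + (p:ℝ)) - 1 = (p:ℝ) + (s - 1) by ring,
    show (t + (q:ℝ)) - 1 = (q:ℝ) + (t - 1) by ring,
    Real.rpow_add hu0, Real.rpow_add hu1']
  ring

noncomputable def cKL (s t x y : ℝ) (n m k l : ℕ) : ℝ :=
  (n.choose k : ℝ) * (m.choose l : ℝ) * x ^ (n - k + l) * y ^ (m - l + k) *
    ((1 / betaFn s t) ^ 2 * (Real.Gamma (s + t) / Real.Gamma (s + t + n)) *
      (Real.Gamma (s + t) / Real.Gamma (s + t + m)))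

lemma integrand_eq (s t x y : ℝ) (n m : ℕ) (u v : ℝ) :
    Dst s t n m (x * (1 - u) + y * v) (y * (1 - v) + x * u) * phiBeta s t u v
      = ∑ k ∈ Finset.range (n + 1), ∑ l ∈ Finset.range (m + 1),
          (cKL s t x y n m k l * baseFn s t l (n - k) u) * baseFn s t k (m - l) v := by
  rw [Dst, dst, dst, phiBeta,
    show x * (1 - u) + y * v = y * v + x * (1 - u) from add_comm _ _, add_pow,
    show y * (1 - v) + x * u = x * u + y * (1 - v) from add_comm _ _, add_pow]
  simp only [Finset.sum_mul, Finset.sum_div, Finset.mul_sum]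
  rw [Finset.sum_comm]
  refine Finset.sum_congr rfl fun k hk => Finset.sum_congr rfl fun l hl => ?_
  rw [cKL, baseFn, baseFn]
  rw [pow_add x, pow_add y, mul_pow y v, mul_pow x (1 - u), mul_pow x u, mul_pow y (1 - v)]
  ring

set_option maxHeartbeats 2000000 in
lemma term_eq (s t : ℝ) (hs : 0 < s) (ht : 0 < t) (x y : ℝ) {n m k l : ℕ}
    (hk : k ≤ n) (hl : l ≤ m) :
    (cKL s t x y n m k l * betaFn (s + (k : ℝ)) (t + ((m - l : ℕ) : ℝ)))
        * betaFn (s + (l : ℝ)) (t + ((n - k : ℕ) : ℝ))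
      = rRate s t n m k l * Dst s t (n - k + l) (m - l + k) x y := by
  have hkr : (k : ℝ) ≤ n := by exact_mod_cast hk
  have hlr : (l : ℝ) ≤ m := by exact_mod_cast hl
  have hG : ∀ a : ℝ, 0 < a → Real.Gamma a ≠ 0 := fun a ha => (Real.Gamma_pos_of_pos ha).ne'
  have h1 : Real.Gamma s ≠ 0 := hG _ hs
  have h2 : Real.Gamma t ≠ 0 := hG _ ht
  have h3 : Real.Gamma (s + t) ≠ 0 := hG _ (by linarith)
  have h4 : Real.Gamma (s + t + (n : ℝ)) ≠ 0 := hG _ (by positivity)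
  have h5 : Real.Gamma (s + t + (m : ℝ)) ≠ 0 := hG _ (by positivity)
  have h6 : Real.Gamma (s + (k : ℝ) + (t + ((m : ℝ) - (l : ℝ)))) ≠ 0 := hG _ (by
    have : (0:ℝ) ≤ (k : ℝ) := Nat.cast_nonneg k
    linarith)
  have h7 : Real.Gamma (s + (l : ℝ) + (t + ((n : ℝ) - (k : ℝ)))) ≠ 0 := hG _ (by
    have : (0:ℝ) ≤ (l : ℝ) := Nat.cast_nonneg l
    linarith)
  have h8 : ((n - k).factorial : ℝ) ≠ 0 := by positivity
  have h9 : ((m - l).factorial : ℝ) ≠ 0 := by positivity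
  have h10 : (k.factorial : ℝ) ≠ 0 := by positivity
  have h11 : (l.factorial : ℝ) ≠ 0 := by positivity
  have h12 : (n.factorial : ℝ) ≠ 0 := by positivity
  have h13 : (m.factorial : ℝ) ≠ 0 := by positivity
  rw [cKL, rRate, wBB, wBB, Dst, dst, dst]
  simp only [betaFn, Real.Gamma_nat_eq_factorial]
  rw [Nat.cast_choose ℝ hk, Nat.cast_choose ℝ hl]
  push_cast [Nat.cast_sub hk, Nat.cast_sub hl]
  ring_nf
  ring_nf at h1 h2 h3 h4 h5 h6 h7 h8 h9 h10 h11 h12 h13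
  field_simp


set_option maxHeartbeats 1000000 in
theorem generalized_duality_transition_operator
    (s t : ℝ) (hs : 0 < s) (ht : 0 < t)
    (x y : ℝ) (hx : 0 ≤ x) (hy : 0 ≤ y) (n m : ℕ) :
    (∫ u in (0:ℝ)..1, ∫ v in (0:ℝ)..1,
        Dst s t n m (x * (1 - u) + y * v) (y * (1 - v) + x * u) * phiBeta s t u v)
      = ∑ k ∈ Finset.range (n + 1), ∑ l ∈ Finset.range (m + 1),
          rRate s t n m k l * Dst s t (n - k + l) (m - l + k) x y := by
  simp only [integrand_eq s t x y n m]
  have hinner : ∀ u : ℝ,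
      (∫ v in (0:ℝ)..1, ∑ k ∈ Finset.range (n + 1), ∑ l ∈ Finset.range (m + 1),
          (cKL s t x y n m k l * baseFn s t l (n - k) u) * baseFn s t k (m - l) v)
        = ∑ k ∈ Finset.range (n + 1), ∑ l ∈ Finset.range (m + 1),
            (cKL s t x y n m k l * betaFn (s + (k : ℝ)) (t + ((m - l : ℕ) : ℝ)))
              * baseFn s t l (n - k) u := by
    intro u
    have hInt : ∀ k ∈ Finset.range (n + 1), IntervalIntegrable
        (fun v => ∑ l ∈ Finset.range (m + 1),
          (cKL s t x y n m k l * baseFn s t l (n - k) u) * baseFn s t k (m - l) v)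
        MeasureTheory.volume 0 1 := by
      intro k _
      have h1 := IntervalIntegrable.sum (μ := MeasureTheory.volume) (a := (0:ℝ)) (b := 1)
        (Finset.range (m + 1)) (fun l _ =>
          ((baseFn_intervalIntegrable hs ht k (m - l)).const_mul
            (cKL s t x y n m k l * baseFn s t l (n - k) u) : IntervalIntegrable
              (fun v => (cKL s t x y n m k l * baseFn s t l (n - k) u)
                * baseFn s t k (m - l) v) MeasureTheory.volume 0 1))
      rwa [Finset.sum_fn] at h1
    refine (intervalIntegral.integral_finset_sum hInt).trans ?_
    refine Finset.sum_congr rfl fun k _ => ?_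
    have hInt2 : ∀ l ∈ Finset.range (m + 1), IntervalIntegrable
        (fun v => (cKL s t x y n m k l * baseFn s t l (n - k) u) * baseFn s t k (m - l) v)
        MeasureTheory.volume 0 1 :=
      fun l _ => (baseFn_intervalIntegrable hs ht k (m - l)).const_mul _
    refine (intervalIntegral.integral_finset_sum hInt2).trans ?_
    refine Finset.sum_congr rfl fun l _ => ?_
    refine (intervalIntegral.integral_const_mul _ _).trans ?_
    rw [baseFn_integral hs ht k (m - l)]
    ring
  rw [intervalIntegral.integral_congr (g := fun u =>
      ∑ k ∈ Finset.range (n + 1), ∑ l ∈ Finset.range (m + 1),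
        (cKL s t x y n m k l * betaFn (s + (k : ℝ)) (t + ((m - l : ℕ) : ℝ)))
          * baseFn s t l (n - k) u) (fun u _ => hinner u)]
  have hInt3 : ∀ k ∈ Finset.range (n + 1), IntervalIntegrable
      (fun u => ∑ l ∈ Finset.range (m + 1),
        (cKL s t x y n m k l * betaFn (s + (k : ℝ)) (t + ((m - l : ℕ) : ℝ)))
          * baseFn s t l (n - k) u)
      MeasureTheory.volume 0 1 := by
    intro k _
    have h1 := IntervalIntegrable.sum (μ := MeasureTheory.volume) (a := (0:ℝ)) (b := 1)
      (Finset.range (m + 1)) (fun l _ =>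
        ((baseFn_intervalIntegrable hs ht l (n - k)).const_mul
          (cKL s t x y n m k l * betaFn (s + (k : ℝ)) (t + ((m - l : ℕ) : ℝ))) : IntervalIntegrable
            (fun u => (cKL s t x y n m k l * betaFn (s + (k : ℝ)) (t + ((m - l : ℕ) : ℝ)))
              * baseFn s t l (n - k) u) MeasureTheory.volume 0 1))
    rwa [Finset.sum_fn] at h1
  refine (intervalIntegral.integral_finset_sum hInt3).trans ?_
  refine Finset.sum_congr rfl fun k hk => ?_
  have hInt4 : ∀ l ∈ Finset.range (m + 1), IntervalIntegrable
      (fun u => (cKL s t x y n m k l * betaFn (s + (k : ℝ)) (t + ((m - l : ℕ) : ℝ)))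
        * baseFn s t l (n - k) u)
      MeasureTheory.volume 0 1 :=
    fun l _ => (baseFn_intervalIntegrable hs ht l (n - k)).const_mul _
  refine (intervalIntegral.integral_finset_sum hInt4).trans ?_
  refine Finset.sum_congr rfl fun l hl => ?_
  refine (intervalIntegral.integral_const_mul _ _).trans ?_
  rw [baseFn_integral hs ht l (n - k)]
  exact term_eq s t hs ht x y (Finset.mem_range_succ_iff.mp hk) (Finset.mem_range_succ_iff.mp hl)
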